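/- Let F_1, ..., F_m, F_{m+1} be m+1 i.i.d. random vectors in ℝ^d defined on a common probability space, such that for each coordinate j ∈ {1,...,d} the common marginal distribution of the j-th coordinate is atomless (so the m+1 values in coordinate j are almost surely pairwise distinct). Fix a miscoverage level α ∈ [0,1] and assume ⌊(m+1)α/2⌋ ≥ 1 and ⌈(m+1)(1-α/2)⌉ ≤ m. For each j let l̂_{j,α} be the ⌊(m+1)α/2⌋-th smallest value and û_{j,α} the ⌈(m+1)(1-α/2)⌉-th smallest value among (F_1)_j, ..., (F_m)_j. Then for every j ∈ {1,...,d}, P[ l̂_{j,α} ≤ (F_{m+1})_j ≤ û_{j,α} ] ≥ 1 - α. -/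

import Mathlib

open MeasureTheory Finset

/-- The `k`-th smallest value (1-indexed) among the values of `g : Fin m → ℝ`,
with junk value `0` when `k - 1` is out of range. -/
noncomputable def kthSmallest {m : ℕ} (g : Fin m → ℝ) (k : ℕ) : ℝ :=
  if h : k - 1 < m then g (Tuple.sort g ⟨k - 1, h⟩) else 0

lemma kthSmallest_mem_iff {m k : ℕ} (hk1 : 1 ≤ k) (hkm : k ≤ m) (g : Fin m → ℝ)
    (Q : ℝ → Prop) [DecidablePred Q] (hQ : ∀ a b : ℝ, a ≤ b → Q b → Q a) :
    Q (kthSmallest g k) ↔ k ≤ (univ.filter fun i => Q (g i)).card := by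
  have hlt : k - 1 < m := by omega
  set σ := Tuple.sort g with hσ
  have hmono := Tuple.monotone_sort g
  have hcard : (univ.filter fun i => Q (g i)).card
      = (univ.filter fun p => Q (g (σ p))).card := by
    refine Finset.card_equiv σ.symm fun i => ?_
    simp
  rw [kthSmallest, dif_pos hlt, hcard]
  constructor
  · intro h
    calc k = (Finset.Iic (⟨k - 1, hlt⟩ : Fin m)).card := by
            rw [Fin.card_Iic]; simp; omega
      _ ≤ _ := by
            refine Finset.card_le_card fun p hp => ?_
            simp only [Finset.mem_Iic] at hp
            simp only [Finset.mem_filter, Finset.mem_univ, true_and]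
            exact hQ _ _ (hmono hp) h
  · intro h
    by_contra hc
    have hsub : (univ.filter fun p => Q (g (σ p))) ⊆ Finset.Iio (⟨k - 1, hlt⟩ : Fin m) := by
      intro p hp
      simp only [Finset.mem_filter, Finset.mem_univ, true_and] at hp
      simp only [Finset.mem_Iio]
      by_contra hge
      exact hc (hQ _ _ (hmono (le_of_not_gt hge)) hp)
    have := Finset.card_le_card hsub
    rw [Fin.card_Iio] at this
    simp at this
    omega

lemma kthSmallest_le_iff {m k : ℕ} (hk1 : 1 ≤ k) (hkm : k ≤ m) (g : Fin m → ℝ) (t : ℝ) :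
    kthSmallest g k ≤ t ↔ k ≤ (univ.filter fun i => g i ≤ t).card :=
  kthSmallest_mem_iff hk1 hkm g (fun v => v ≤ t) (fun _ _ hab hb => hab.trans hb)

lemma le_kthSmallest_iff {m k : ℕ} (hk1 : 1 ≤ k) (hkm : k ≤ m) (g : Fin m → ℝ) (t : ℝ) :
    t ≤ kthSmallest g k ↔ (univ.filter fun i => g i < t).card < k := by
  have h := kthSmallest_mem_iff hk1 hkm g (fun v => v < t)
    (fun _ _ hab hb => lt_of_le_of_lt hab hb)
  constructor
  · intro ht
    by_contra hc
    push_neg at hc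
    exact absurd (h.mpr hc) (not_lt.mpr ht)
  · intro hc
    by_contra ht
    push_neg at ht
    exact absurd (h.mp ht) (not_le.mpr hc)

lemma measurable_filter_card {δ : Type*} [MeasurableSpace δ] {ι : Type*} [Fintype ι]
    (p : ι → δ → Prop) [∀ i, DecidablePred (p i)]
    (hp : ∀ i, MeasurableSet {x | p i x}) :
    Measurable fun x => (univ.filter fun i => p i x).card := by
  simp_rw [Finset.card_filter]
  exact Finset.measurable_sum _ fun i _ =>
    Measurable.ite (hp i) measurable_const measurable_const


/-- **Calibrated quantiles guarantee entrywise coverage.**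
Let `F 0, …, F m` be `m + 1` i.i.d. random vectors in `ℝ^d` whose common
coordinate marginals are atomless. For a miscoverage level `α ∈ [0, 1]` with
`1 ≤ ⌊(m+1)α/2⌋` and `⌈(m+1)(1-α/2)⌉ ≤ m`, the entrywise calibrated empirical
quantiles `l̂_{j,α}` (the `⌊(m+1)α/2⌋`-th smallest value) and `û_{j,α}`
(the `⌈(m+1)(1-α/2)⌉`-th smallest value) of the first `m` samples satisfy, for
every coordinate `j`, `P[l̂_{j,α} ≤ (F_{m+1})_j ≤ û_{j,α}] ≥ 1 - α`. -/
theorem entrywise_coverage_of_calibrated_quantiles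
    {Ω : Type*} [MeasurableSpace Ω] (P : Measure Ω) [IsProbabilityMeasure P]
    (m d : ℕ)
    (F : Fin (m + 1) → Ω → (Fin d → ℝ))
    (hFmeas : ∀ i, Measurable (F i))
    (hindep : ProbabilityTheory.iIndepFun F P)
    (μ : Measure (Fin d → ℝ))
    (hid : ∀ i, Measure.map (F i) P = μ)
    (hatomless : ∀ (j : Fin d) (r : ℝ), μ.map (fun x => x j) {r} = 0)
    (α : ℝ) (hα0 : 0 ≤ α) (hα1 : α ≤ 1)
    (hkl : 1 ≤ ⌊((m : ℝ) + 1) * α / 2⌋₊)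
    (hku : ⌈((m : ℝ) + 1) * (1 - α / 2)⌉₊ ≤ m) :
    ∀ j : Fin d,
      ENNReal.ofReal (1 - α) ≤
        P {ω |
          kthSmallest (fun i : Fin m => F i.castSucc ω j) ⌊((m : ℝ) + 1) * α / 2⌋₊
              ≤ F (Fin.last m) ω j ∧
          F (Fin.last m) ω j
              ≤ kthSmallest (fun i : Fin m => F i.castSucc ω j)
                  ⌈((m : ℝ) + 1) * (1 - α / 2)⌉₊} := by
  intro j
  classical
  set kl := ⌊((m : ℝ) + 1) * α / 2⌋₊ with hkl_def
  set ku := ⌈((m : ℝ) + 1) * (1 - α / 2)⌉₊ with hku_def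
  have hm1pos : (0:ℝ) < (m:ℝ) + 1 := by positivity
  have hklR : (kl : ℝ) ≤ ((m:ℝ)+1) * α / 2 := Nat.floor_le (by positivity)
  have hkuR : ((m:ℝ)+1) * (1 - α/2) ≤ (ku:ℝ) := Nat.le_ceil _
  have hklku : kl ≤ ku := by
    have h2 : ((m:ℝ)+1) * α / 2 ≤ ((m:ℝ)+1) * (1 - α/2) := by nlinarith
    exact_mod_cast hklR.trans (h2.trans hkuR)
  have hklm : kl ≤ m := hklku.trans hku
  have hku1 : 1 ≤ ku := le_trans hkl hklku
  haveI hμP : IsProbabilityMeasure μ := by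
    rw [← hid 0]; exact Measure.isProbabilityMeasure_map (hFmeas 0).aemeasurable
  set ν : Measure ℝ := μ.map (fun x => x j) with hν_def
  haveI hνP : IsProbabilityMeasure ν :=
    Measure.isProbabilityMeasure_map (measurable_pi_apply j).aemeasurable
  have hν_atom : ∀ r : ℝ, ν {r} = 0 := fun r => hatomless j r
  set X : Fin (m+1) → Ω → ℝ := fun i ω => F i ω j with hX_def
  have hXmeas : ∀ i, Measurable (X i) := fun i => (measurable_pi_apply j).comp (hFmeas i)
  have hXmap : ∀ i, P.map (X i) = ν := by
    intro i
    rw [hν_def, ← hid i, Measure.map_map (measurable_pi_apply j) (hFmeas i)]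
    rfl
  have hXindep : ProbabilityTheory.iIndepFun X P :=
    hindep.comp (fun _ y => y j) (fun _ => measurable_pi_apply j)
  set G : Ω → (Fin (m+1) → ℝ) := fun ω i => X i ω with hG_def
  have hGmeas : Measurable G := measurable_pi_lambda _ hXmeas
  set π : Measure (Fin (m+1) → ℝ) := Measure.pi (fun _ => ν) with hπ_def
  haveI : IsProbabilityMeasure π := by rw [hπ_def]; infer_instance
  have hmap : P.map G = π := by
    rw [hπ_def]
    refine (Measure.pi_eq fun s hs => ?_).symm
    rw [Measure.map_apply hGmeas (MeasurableSet.univ_pi hs)]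
    have hset : G ⁻¹' Set.pi Set.univ s = ⋂ i ∈ Finset.univ, X i ⁻¹' s i := by
      ext ω; simp [hG_def, Set.mem_pi]
    rw [hset, hXindep.measure_inter_preimage_eq_mul Finset.univ (fun i _ => hs i)]
    exact Finset.prod_congr rfl fun i _ => by
      rw [← hXmap i, Measure.map_apply (hXmeas i) (hs i)]
  have hnull : ∀ i i' : Fin (m+1), i ≠ i' → π {x | x i = x i'} = 0 := by
    intro i i' hne
    have hdiag : MeasurableSet {p : ℝ × ℝ | p.1 = p.2} :=
      measurableSet_eq_fun measurable_fst measurable_snd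
    have hpair : P.map (fun ω => (X i ω, X i' ω)) = ν.prod ν := by
      have hind := hXindep.indepFun hne
      rw [(ProbabilityTheory.indepFun_iff_map_prod_eq_prod_map_map (hXmeas i).aemeasurable
        (hXmeas i').aemeasurable).mp hind, hXmap i, hXmap i']
    have hprod0 : (ν.prod ν) {p : ℝ × ℝ | p.1 = p.2} = 0 := by
      rw [Measure.prod_apply hdiag]
      have hz : ∀ a : ℝ, ν (Prod.mk a ⁻¹' {p : ℝ × ℝ | p.1 = p.2}) = 0 := by
        intro a
        have : (Prod.mk a ⁻¹' {p : ℝ × ℝ | p.1 = p.2}) = {a} := by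
          ext b; simp [eq_comm]
        rw [this]; exact hν_atom a
      simp [hz, hν_atom]
    have hmeas_xi : MeasurableSet {x : Fin (m+1) → ℝ | x i = x i'} :=
      measurableSet_eq_fun (measurable_pi_apply i) (measurable_pi_apply i')
    rw [← hmap, Measure.map_apply hGmeas hmeas_xi]
    have hpre : G ⁻¹' {x | x i = x i'}
        = (fun ω => (X i ω, X i' ω)) ⁻¹' {p : ℝ × ℝ | p.1 = p.2} := rfl
    rw [hpre, ← Measure.map_apply ((hXmeas i).prodMk (hXmeas i')) hdiag, hpair, hprod0]
  set D : Set (Fin (m+1) → ℝ) := {x | ∀ i i' : Fin (m+1), i ≠ i' → x i ≠ x i'} with hD_def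
  have hD : MeasurableSet D := by
    have hDi : D = ⋂ i, ⋂ i', {x : Fin (m+1) → ℝ | i ≠ i' → x i ≠ x i'} := by
      ext x; simp [hD_def]
    rw [hDi]
    refine MeasurableSet.iInter fun i => MeasurableSet.iInter fun i' => ?_
    by_cases h : i = i'
    · simp [h]
    · have : {x : Fin (m+1) → ℝ | i ≠ i' → x i ≠ x i'} = {x | x i = x i'}ᶜ := by
        ext x; simp [h]
      rw [this]
      exact (measurableSet_eq_fun (measurable_pi_apply i) (measurable_pi_apply i')).compl
  have hπD : π D = 1 := by
    rw [← prob_compl_eq_zero_iff hD]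
    have hsub : Dᶜ ⊆ ⋃ (i : Fin (m+1)) (i' : Fin (m+1)), {x | i ≠ i' ∧ x i = x i'} := by
      intro x hx
      simp only [hD_def, Set.mem_compl_iff, Set.mem_setOf_eq] at hx
      push_neg at hx
      obtain ⟨i, i', hne, heq⟩ := hx
      exact Set.mem_iUnion.mpr ⟨i, Set.mem_iUnion.mpr ⟨i', hne, heq⟩⟩
    refine measure_mono_null hsub (measure_iUnion_null fun i => measure_iUnion_null fun i' => ?_)
    by_cases h : i = i'
    · have : {x : Fin (m+1) → ℝ | i ≠ i' ∧ x i = x i'} = ∅ := by ext x; simp [h]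
      simp [this]
    · exact measure_mono_null (fun x hx => hx.2) (hnull i i' h)
  set cnt : Fin (m+1) → (Fin (m+1) → ℝ) → ℕ :=
    fun i0 x => (univ.filter fun i => x i < x i0).card with hcnt_def
  have hcntmeas : ∀ i0, Measurable (cnt i0) := fun i0 =>
    measurable_filter_card _ fun i =>
      measurableSet_lt (measurable_pi_apply i) (measurable_pi_apply i0)
  set B : Fin (m+1) → ℕ → Set (Fin (m+1) → ℝ) := fun i0 r => {x | cnt i0 x = r} with hB_def
  have hBmeas : ∀ i0 r, MeasurableSet (B i0 r) := fun i0 r =>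
    hcntmeas i0 (measurableSet_singleton r)
  have hcnt_lt : ∀ (x : Fin (m+1) → ℝ) (i0 i1 : Fin (m+1)),
      x i0 < x i1 → cnt i0 x < cnt i1 x := by
    intro x i0 i1 hlt
    have hsub : (univ.filter fun i => x i < x i0) ⊆ (univ.filter fun i => x i < x i1) :=
      Finset.monotone_filter_right univ fun i _ (hi : x i < x i0) => hi.trans hlt
    refine Finset.card_lt_card ((Finset.ssubset_iff_of_subset hsub).mpr ⟨i0, ?_, ?_⟩)
    · simp [hlt]
    · simp
  have hcnt_le : ∀ (i0 : Fin (m+1)) x, cnt i0 x ≤ m := by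
    intro i0 x
    have hsub : (univ.filter fun i => x i < x i0) ⊆ univ.erase i0 := by
      intro i hi
      simp only [Finset.mem_filter, Finset.mem_univ, true_and] at hi
      exact Finset.mem_erase.mpr ⟨fun h => absurd (h ▸ hi) (lt_irrefl _), Finset.mem_univ i⟩
    have hcard := Finset.card_le_card hsub
    rwa [Finset.card_erase_of_mem (Finset.mem_univ i0), Finset.card_univ, Fintype.card_fin,
      Nat.add_sub_cancel] at hcard
  have hinj : ∀ x ∈ D, Function.Injective fun i0 => cnt i0 x := by
    intro x hx i0 i1 h
    by_contra hne
    rcases (hx i0 i1 hne).lt_or_gt with hlt | hlt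
    · exact absurd h (Nat.ne_of_lt (hcnt_lt x i0 i1 hlt))
    · exact absurd h.symm (Nat.ne_of_lt (hcnt_lt x i1 i0 hlt))
  have hsurj : ∀ x ∈ D, ∀ r : ℕ, r ≤ m → ∃ i0, cnt i0 x = r := by
    intro x hx r hr
    have hf : Function.Injective
        (fun i0 : Fin (m+1) => (⟨cnt i0 x, Nat.lt_succ_of_le (hcnt_le i0 x)⟩ : Fin (m+1))) := by
      intro a b hab
      exact hinj x hx (by simpa using congrArg Fin.val hab)
    obtain ⟨i0, hi0⟩ := Finite.injective_iff_surjective.mp hf ⟨r, Nat.lt_succ_of_le hr⟩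
    exact ⟨i0, by simpa using congrArg Fin.val hi0⟩
  have hswap : ∀ (i0 : Fin (m+1)) r, π (B i0 r ∩ D) = π (B (Fin.last m) r ∩ D) := by
    intro i0 r
    set e : Equiv.Perm (Fin (m+1)) := Equiv.swap i0 (Fin.last m) with he_def
    set T := MeasurableEquiv.piCongrLeft (fun _ : Fin (m+1) => ℝ) e with hT_def
    have hmp : MeasurePreserving T π π := by
      rw [hπ_def]; exact measurePreserving_piCongrLeft (fun _ => ν) e
    have hTapp : ∀ (x : Fin (m+1) → ℝ) i, T x i = x (e.symm i) := by
      intro x i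
      show (Equiv.piCongrLeft (fun _ => ℝ) e) x i = x (e.symm i)
      rw [Equiv.piCongrLeft_apply]
      exact eq_rec_constant _ _
    have hTD : T ⁻¹' D = D := by
      ext x
      simp only [Set.mem_preimage, hD_def, Set.mem_setOf_eq]
      constructor
      · intro h i i' hne
        have := h (e i) (e i') (fun hc => hne (e.injective hc))
        simpa [hTapp, Equiv.symm_apply_apply] using this
      · intro h i i' hne
        simp only [hTapp]
        exact h _ _ (fun hc => hne (e.symm.injective hc))
    have hTcnt : ∀ (x : Fin (m+1) → ℝ) i0', cnt i0' (T x) = cnt (e.symm i0') x := by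
      intro x i0'
      simp only [hcnt_def, hTapp]
      exact Finset.card_equiv e.symm (fun i => by simp)
    have hTB : T ⁻¹' (B (Fin.last m) r) = B i0 r := by
      ext x
      simp only [Set.mem_preimage, hB_def, Set.mem_setOf_eq, hTcnt]
      have hel : e.symm (Fin.last m) = i0 := by
        rw [he_def, Equiv.symm_swap, Equiv.swap_apply_right]
      rw [hel]
    have hBD : B i0 r ∩ D = T ⁻¹' (B (Fin.last m) r ∩ D) := by
      rw [Set.preimage_inter, hTB, hTD]
    rw [hBD, hmp.measure_preimage ((hBmeas _ r).inter hD).nullMeasurableSet]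
  set M : ENNReal := (m : ENNReal) + 1 with hM_def
  have hMne0 : M ≠ 0 := by simp [hM_def]
  have hMnetop : M ≠ ⊤ := by simp [hM_def]
  have hunif : ∀ r : ℕ, r ≤ m → π (B (Fin.last m) r ∩ D) = M⁻¹ := by
    intro r hr
    have hcover : D = ⋃ i0, (B i0 r ∩ D) := by
      ext x
      constructor
      · intro hx
        obtain ⟨i0, hi0⟩ := hsurj x hx r hr
        exact Set.mem_iUnion.mpr ⟨i0, ⟨hi0, hx⟩⟩
      · intro hx
        obtain ⟨i0, _, hxD⟩ := Set.mem_iUnion.mp hx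
        exact hxD
    have hdisj : Pairwise (Function.onFun Disjoint fun i0 => B i0 r ∩ D) := by
      intro i0 i1 hne
      refine Set.disjoint_left.mpr fun x hx0 hx1 => ?_
      exact hne (hinj x hx0.2 (hx0.1.trans hx1.1.symm))
    have hsum : ∑ i0 : Fin (m+1), π (B i0 r ∩ D) = 1 := by
      rw [← tsum_fintype (L := SummationFilter.unconditional _), ← measure_iUnion hdisj (fun i0 => (hBmeas i0 r).inter hD),
        ← hcover, hπD]
    have hconst : ∑ i0 : Fin (m+1), π (B i0 r ∩ D) = M * π (B (Fin.last m) r ∩ D) := by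
      rw [Finset.sum_congr rfl (fun i0 _ => hswap i0 r), Finset.sum_const, Finset.card_univ,
        Fintype.card_fin, nsmul_eq_mul, hM_def]
      push_cast
      ring
    have hMc : M * π (B (Fin.last m) r ∩ D) = 1 := by rw [← hconst, hsum]
    calc π (B (Fin.last m) r ∩ D) = M⁻¹ * (M * π (B (Fin.last m) r ∩ D)) := by
          rw [← mul_assoc, ENNReal.inv_mul_cancel hMne0 hMnetop, one_mul]
      _ = M⁻¹ := by rw [hMc, mul_one]
  set S : Set (Fin (m+1) → ℝ) :=
    {x | kl ≤ (univ.filter fun i : Fin m => x i.castSucc ≤ x (Fin.last m)).card ∧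
         (univ.filter fun i : Fin m => x i.castSucc < x (Fin.last m)).card < ku} with hS_def
  have hSmeas : MeasurableSet S := by
    have h1 : Measurable fun x : Fin (m+1) → ℝ =>
        (univ.filter fun i : Fin m => x i.castSucc ≤ x (Fin.last m)).card :=
      measurable_filter_card _ fun i =>
        measurableSet_le (measurable_pi_apply _) (measurable_pi_apply _)
    have h2 : Measurable fun x : Fin (m+1) → ℝ =>
        (univ.filter fun i : Fin m => x i.castSucc < x (Fin.last m)).card :=
      measurable_filter_card _ fun i =>
        measurableSet_lt (measurable_pi_apply _) (measurable_pi_apply _)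
    exact MeasurableSet.inter (h1 ((Set.to_countable (Set.Ici kl)).measurableSet))
      (h2 ((Set.to_countable (Set.Iio ku)).measurableSet))
  have hevent : {ω | kthSmallest (fun i : Fin m => F i.castSucc ω j) kl ≤ F (Fin.last m) ω j ∧
      F (Fin.last m) ω j ≤ kthSmallest (fun i : Fin m => F i.castSucc ω j) ku} = G ⁻¹' S := by
    ext ω
    simp only [Set.mem_setOf_eq, Set.mem_preimage, hS_def]
    rw [kthSmallest_le_iff hkl hklm, le_kthSmallest_iff hku1 hku]
  have hcount_eq : ∀ x ∈ D,
      (univ.filter fun i : Fin m => x i.castSucc ≤ x (Fin.last m)).card = cnt (Fin.last m) x ∧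
      (univ.filter fun i : Fin m => x i.castSucc < x (Fin.last m)).card = cnt (Fin.last m) x := by
    intro x hxD
    have hlt_eq : (univ.filter fun i : Fin m => x i.castSucc < x (Fin.last m)).card
        = cnt (Fin.last m) x := by
      rw [hcnt_def]
      refine Finset.card_bij (fun i _ => i.castSucc) ?_ ?_ ?_
      · intro i hi
        simp only [Finset.mem_filter, Finset.mem_univ, true_and] at hi ⊢
        exact hi
      · intro a _ b _ hab
        exact Fin.castSucc_injective m hab
      · intro i' hi'
        simp only [Finset.mem_filter, Finset.mem_univ, true_and] at hi'
        have hne : i' ≠ Fin.last m := by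
          intro h; rw [h] at hi'; exact lt_irrefl _ hi'
        refine ⟨i'.castPred hne, ?_, Fin.castSucc_castPred i' hne⟩
        simp only [Finset.mem_filter, Finset.mem_univ, true_and]
        rwa [Fin.castSucc_castPred]
    refine ⟨?_, hlt_eq⟩
    rw [← hlt_eq]
    congr 1
    refine Finset.filter_congr fun i _ => ?_
    have hne : x i.castSucc ≠ x (Fin.last m) :=
      hxD i.castSucc (Fin.last m) (Fin.castSucc_lt_last i).ne
    exact ⟨fun h => h.lt_of_ne hne, le_of_lt⟩
  have hSD : S ∩ D = (⋃ r ∈ Finset.Icc kl (ku - 1), B (Fin.last m) r) ∩ D := by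
    ext x
    simp only [Set.mem_inter_iff, Set.mem_iUnion, hS_def, Set.mem_setOf_eq, Finset.mem_Icc,
      hB_def]
    constructor
    · rintro ⟨⟨h1, h2⟩, hxD⟩
      rw [(hcount_eq x hxD).1] at h1
      rw [(hcount_eq x hxD).2] at h2
      exact ⟨⟨cnt (Fin.last m) x, ⟨h1, by omega⟩, rfl⟩, hxD⟩
    · rintro ⟨⟨r, ⟨hr1, hr2⟩, hr⟩, hxD⟩
      refine ⟨⟨?_, ?_⟩, hxD⟩
      · rw [(hcount_eq x hxD).1, hr]; exact hr1
      · rw [(hcount_eq x hxD).2, hr]; omega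
  rw [hevent, ← Measure.map_apply hGmeas hSmeas, hmap]
  have hcalc : π (S ∩ D) = (ku - kl : ℕ) * M⁻¹ := by
    rw [hSD, Set.iUnion₂_inter]
    have hdisj2 : Set.PairwiseDisjoint ↑(Finset.Icc kl (ku - 1))
        (fun r => B (Fin.last m) r ∩ D) := by
      intro r _ r' _ hne
      refine Set.disjoint_left.mpr fun x hx0 hx1 => ?_
      exact hne (hx0.1.symm.trans hx1.1)
    rw [measure_biUnion_finset hdisj2 (fun r _ => (hBmeas _ r).inter hD)]
    rw [Finset.sum_congr rfl (fun r hr => hunif r (by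
      simp only [Finset.mem_Icc] at hr; omega))]
    rw [Finset.sum_const, Nat.card_Icc, nsmul_eq_mul]
    congr 2
    omega
  have hreal : (1 - α) ≤ ((ku - kl : ℕ) : ℝ) / ((m:ℝ) + 1) := by
    rw [Nat.cast_sub hklku, le_div_iff₀ hm1pos]
    nlinarith
  have hENN : ((ku - kl : ℕ) : ENNReal) * M⁻¹
      = ENNReal.ofReal (((ku - kl : ℕ) : ℝ) / ((m:ℝ)+1)) := by
    rw [ENNReal.ofReal_div_of_pos hm1pos, div_eq_mul_inv]
    congr 1
    · rw [ENNReal.ofReal_natCast]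
    · rw [hM_def, ENNReal.ofReal_add (by positivity) zero_le_one, ENNReal.ofReal_natCast,
        ENNReal.ofReal_one]
  calc ENNReal.ofReal (1 - α)
      ≤ ENNReal.ofReal (((ku - kl : ℕ) : ℝ) / ((m:ℝ)+1)) := ENNReal.ofReal_le_ofReal hreal
    _ = ((ku - kl : ℕ) : ENNReal) * M⁻¹ := hENN.symm
    _ = π (S ∩ D) := hcalc.symm
    _ ≤ π S := measure_mono Set.inter_subset_left
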